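/- Consider the following exponentially weighted average scheme with entering experts. Let t_1 = 2 < t_2 < t_3 < … be a strictly increasing sequence of integers (starting times), and for t ≥ 2 set D_t = max{d ≥ 1 : t_d ≤ t}. Let (η_t)_{t≥1} be a positive nonincreasing sequence. For each d and each t ≥ t_d let f_{d,t} ∈ [0,1] be the prediction of expert d, and let y_t ∈ [0,1]. Define weights by: p_{1,t_1} = 1; for each t ≥ t_1 and d ≤ D_t, p_{d,t+1} = (D_t/D_{t+1}) · p_{d,t}^{η_{t+1}/η_t} · exp(−η_{t+1}·ℓ(f_{d,t}, y_t)) / ∑_{k=1}^{D_t} p_{k,t}^{η_{t+1}/η_t} · exp(−η_{t+1}·ℓ(f_{k,t}, y_t)); and if D_{t+1} = D_t + 1, set p_{D_{t+1},t+1} = 1/D_{t+1}. Let ŷ_t = ∑_{d=1}^{D_t} p_{d,t}·f_{d,t}. Then for every T ≥ t_1 and every d with t_d ≤ T: ∑_{t=t_d}^{T} ( ℓ(ŷ_t, y_t) − ℓ(f_{d,t}, y_t) ) ≤ (1/η_{T+1})·log(D_{T+1}) + (1/8)·∑_{t=t_d}^{T} η_t. -/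

import Mathlib

/-- Scalar Hoeffding lemma: for `m ∈ [0,1]` and `s ≤ 0`,
`log (1 - m + m e^s) ≤ m s + s²/8`. -/
lemma aux_hoeff_scalar (m s : ℝ) (hm0 : 0 ≤ m) (hm1 : m ≤ 1) (hs : s ≤ 0) :
    Real.log (1 - m + m * Real.exp s) ≤ m * s + s ^ 2 / 8 := by
  have hden : ∀ u : ℝ, 0 < 1 - m + m * Real.exp u := by
    intro u
    rcases hm0.eq_or_lt with h | h
    · simp [← h]
    · nlinarith [mul_pos h (Real.exp_pos u)]
  set F : ℝ → ℝ := fun u => u ^ 2 / 8 + m * u - Real.log (1 - m + m * Real.exp u) with hF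
  set G : ℝ → ℝ := fun u => u / 4 + m - m * Real.exp u / (1 - m + m * Real.exp u) with hG
  have hdenD : ∀ u : ℝ, HasDerivAt (fun u : ℝ => 1 - m + m * Real.exp u) (m * Real.exp u) u := by
    intro u
    simpa using ((Real.hasDerivAt_exp u).const_mul m).const_add (1 - m)
  have hFD : ∀ u : ℝ, HasDerivAt F (G u) u := by
    intro u
    have h1 : HasDerivAt (fun u : ℝ => u ^ 2 / 8 + m * u)
        (2 * u ^ 1 / 8 + m) u := by
      exact ((hasDerivAt_pow 2 u).div_const 8).add ((hasDerivAt_id u).const_mul m |>.congr_deriv (by ring))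
    have h2 : HasDerivAt (fun u : ℝ => Real.log (1 - m + m * Real.exp u))
        (m * Real.exp u / (1 - m + m * Real.exp u)) u :=
      (hdenD u).log (hden u).ne'
    have := h1.sub h2
    exact this.congr_deriv (by simp only [hG]; ring)
  have hGD : ∀ u : ℝ, HasDerivAt G
      (1 / 4 - (m * Real.exp u * (1 - m + m * Real.exp u) - m * Real.exp u * (m * Real.exp u)) /
        (1 - m + m * Real.exp u) ^ 2) u := by
    intro u
    have h1 : HasDerivAt (fun u : ℝ => u / 4 + m) (1 / 4) u := by
      simpa using ((hasDerivAt_id u).div_const 4).add_const m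
    have h2 : HasDerivAt (fun u : ℝ => m * Real.exp u / (1 - m + m * Real.exp u))
        ((m * Real.exp u * (1 - m + m * Real.exp u) - m * Real.exp u * (m * Real.exp u)) /
          (1 - m + m * Real.exp u) ^ 2) u := by
      exact (((Real.hasDerivAt_exp u).const_mul m)).div (hdenD u) (hden u).ne'
    exact h1.sub h2
  have hGmono : Monotone G := by
    apply monotone_of_hasDerivAt_nonneg hGD
    intro u
    simp only [Pi.zero_apply]
    have he := Real.exp_pos u
    have hd := hden u
    have hnum : (m * Real.exp u * (1 - m + m * Real.exp u) - m * Real.exp u * (m * Real.exp u)) /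
        (1 - m + m * Real.exp u) ^ 2 ≤ 1 / 4 := by
      rw [div_le_div_iff₀ (by positivity) (by norm_num)]
      nlinarith [sq_nonneg (1 - m - m * Real.exp u)]
    linarith
  have hG0 : G 0 = 0 := by
    simp only [hG, Real.exp_zero, mul_one]
    have : 1 - m + m = 1 := by ring
    rw [this]
    ring
  have hFanti : AntitoneOn F (Set.Iic (0 : ℝ)) := by
    apply antitoneOn_of_hasDerivWithinAt_nonpos (convex_Iic 0)
      (fun x _ => (hFD x).continuousAt.continuousWithinAt)
      (fun x _ => (hFD x).hasDerivWithinAt)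
    intro x hx
    rw [interior_Iic] at hx
    have := hGmono (le_of_lt hx)
    rw [hG0] at this
    exact this
  have hF0 : F 0 = 0 := by
    simp only [hF, Real.exp_zero, mul_one, mul_zero]
    have : 1 - m + m = 1 := by ring
    rw [this]
    simp
  have := hFanti (Set.mem_Iic.mpr hs) (Set.mem_Iic.mpr le_rfl) hs
  rw [hF0] at this
  have hFs : 0 ≤ F s := this
  simp only [hF] at hFs
  linarith



/-- Finite weighted Hoeffding lemma. -/
lemma aux_hoeff_sum (s : Finset ℕ) (w x : ℕ → ℝ) (hw : ∀ i ∈ s, 0 ≤ w i)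
    (hw1 : ∑ i ∈ s, w i = 1) (hx : ∀ i ∈ s, x i ∈ Set.Icc (0:ℝ) 1) (c : ℝ) (hc : c ≤ 0) :
    Real.log (∑ i ∈ s, w i * Real.exp (c * x i)) ≤
      c * (∑ i ∈ s, w i * x i) + c ^ 2 / 8 := by
  set m := ∑ i ∈ s, w i * x i with hm
  have hm0 : 0 ≤ m := Finset.sum_nonneg fun i hi => mul_nonneg (hw i hi) (hx i hi).1
  have hm1 : m ≤ 1 := by
    rw [← hw1]
    exact Finset.sum_le_sum fun i hi => by
      nlinarith [(hx i hi).2, hw i hi]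
  -- pointwise convexity bound: e^{c x} ≤ (1-x) + x e^c
  have hpt : ∀ i ∈ s, Real.exp (c * x i) ≤ (1 - x i) + x i * Real.exp c := by
    intro i hi
    have h0 : (0:ℝ) ≤ 1 - x i := by linarith [(hx i hi).2]
    have h1 : (0:ℝ) ≤ x i := (hx i hi).1
    have := convexOn_exp.2 (Set.mem_univ (0:ℝ)) (Set.mem_univ c) h0 h1 (by ring)
    simp only [smul_eq_mul, mul_zero, zero_add, Real.exp_zero, mul_one] at this
    rw [mul_comm c (x i)]; exact this
  have hsum_le : (∑ i ∈ s, w i * Real.exp (c * x i)) ≤ 1 - m + m * Real.exp c := by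
    have : (∑ i ∈ s, w i * Real.exp (c * x i)) ≤
        ∑ i ∈ s, w i * ((1 - x i) + x i * Real.exp c) :=
      Finset.sum_le_sum fun i hi => mul_le_mul_of_nonneg_left (hpt i hi) (hw i hi)
    calc (∑ i ∈ s, w i * Real.exp (c * x i)) ≤
        ∑ i ∈ s, w i * ((1 - x i) + x i * Real.exp c) := this
      _ = (∑ i ∈ s, w i) - m + m * Real.exp c := by
          rw [hm, ← Finset.sum_sub_distrib, Finset.sum_mul, ← Finset.sum_add_distrib]
          exact Finset.sum_congr rfl fun i hi => by ring
      _ = 1 - m + m * Real.exp c := by rw [hw1]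
  have hpos : 0 < ∑ i ∈ s, w i * Real.exp (c * x i) := by
    have hne : ∃ i ∈ s, 0 < w i := by
      by_contra h
      push_neg at h
      have : (∑ i ∈ s, w i) ≤ 0 := Finset.sum_nonpos fun i hi => h i hi
      linarith
    obtain ⟨i, hi, hwi⟩ := hne
    exact Finset.sum_pos' (fun j hj => mul_nonneg (hw j hj) (Real.exp_pos _).le)
      ⟨i, hi, mul_pos hwi (Real.exp_pos _)⟩
  calc Real.log (∑ i ∈ s, w i * Real.exp (c * x i)) ≤
      Real.log (1 - m + m * Real.exp c) := Real.log_le_log hpos hsum_le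
    _ ≤ m * c + c ^ 2 / 8 := aux_hoeff_scalar m c hm0 hm1 hc
    _ = c * m + c ^ 2 / 8 := by ring

lemma aux_telescope (g : ℕ → ℝ) (a : ℕ) : ∀ b, a ≤ b →
    ∑ t ∈ Finset.Icc a b, (g (t + 1) - g t) = g (b + 1) - g a := by
  intro b hb
  induction b, hb using Nat.le_induction with
  | base => simp
  | succ n hn ih => rw [Finset.sum_Icc_succ_top (by omega), ih]; ring



/-- One-step regret inequality for the exponentially weighted forecaster. -/
lemma aux_step (ℓ : ℝ → ℝ → ℝ)
    (hℓ_val : ∀ x ∈ Set.Icc (0:ℝ) 1, ∀ y ∈ Set.Icc (0:ℝ) 1, ℓ x y ∈ Set.Icc (0:ℝ) 1)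
    (hℓ_conv : ∀ y ∈ Set.Icc (0:ℝ) 1, ConvexOn ℝ (Set.Icc (0:ℝ) 1) (fun x => ℓ x y))
    (η1 η2 : ℝ) (hη1 : 0 < η1) (hη2 : 0 < η2) (hη21 : η2 ≤ η1)
    (N N' : ℕ) (hN : 1 ≤ N) (hN' : 1 ≤ N')
    (w : ℕ → ℝ) (hw : ∀ k ∈ Finset.Icc 1 N, 0 < w k)
    (hw1 : ∑ k ∈ Finset.Icc 1 N, w k = 1)
    (g : ℕ → ℝ) (hg : ∀ k, g k ∈ Set.Icc (0:ℝ) 1) (yt : ℝ) (hyt : yt ∈ Set.Icc (0:ℝ) 1)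
    (e : ℕ) (he : e ∈ Finset.Icc 1 N)
    (p' : ℝ) (hp' : p' = ((N:ℝ) / (N':ℝ)) *
        (w e ^ (η2 / η1) * Real.exp (-η2 * ℓ (g e) yt)) /
        (∑ k ∈ Finset.Icc 1 N, w k ^ (η2 / η1) * Real.exp (-η2 * ℓ (g k) yt))) :
    ℓ (∑ k ∈ Finset.Icc 1 N, w k * g k) yt - ℓ (g e) yt ≤
      η1 / 8 + (1 / η2) * Real.log ((N':ℝ) * p') - (1 / η1) * Real.log ((N:ℝ) * w e) := by
  set s := Finset.Icc 1 N with hsdef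
  set α := η2 / η1 with hα
  have hα0 : 0 < α := div_pos hη2 hη1
  have hα1 : α ≤ 1 := by rw [hα, div_le_one hη1]; exact hη21
  set A := 1 / η1 with hA
  set B := 1 / η2 with hB
  have hApos : 0 < A := by positivity
  have hBpos : 0 < B := by positivity
  have hAη : A * η1 = 1 := by rw [hA, one_div, inv_mul_cancel₀ hη1.ne']
  have hBη : B * η2 = 1 := by rw [hB, one_div, inv_mul_cancel₀ hη2.ne']
  have hBα : B * α = A := by rw [hα, hA, hB]; field_simp
  set lk : ℕ → ℝ := fun k => ℓ (g k) yt with hlk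
  have hlk01 : ∀ k, lk k ∈ Set.Icc (0:ℝ) 1 := fun k => hℓ_val (g k) (hg k) yt hyt
  set S := ∑ k ∈ s, w k * Real.exp (-η1 * lk k) with hS
  set Z := ∑ k ∈ s, w k ^ α * Real.exp (-η2 * lk k) with hZ
  set m := ∑ k ∈ s, w k * lk k with hm
  have hsne : s.Nonempty := ⟨1, by simp [hsdef]; omega⟩
  have hSpos : 0 < S :=
    Finset.sum_pos (fun k hk => mul_pos (hw k hk) (Real.exp_pos _)) hsne
  have hZpos : 0 < Z :=
    Finset.sum_pos (fun k hk => mul_pos (Real.rpow_pos_of_pos (hw k hk) α) (Real.exp_pos _)) hsne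
  have hNpos : (0:ℝ) < (N:ℝ) := by exact_mod_cast hN
  have hN'pos : (0:ℝ) < (N':ℝ) := by exact_mod_cast hN'
  have hwe : 0 < w e := hw e he
  -- p' positive
  have hp'pos : 0 < p' := by
    rw [hp']
    exact div_pos (mul_pos (div_pos hNpos hN'pos)
      (mul_pos (Real.rpow_pos_of_pos hwe α) (Real.exp_pos _))) hZpos
  -- Jensen
  have hJ : ℓ (∑ k ∈ s, w k * g k) yt ≤ m := by
    have := (hℓ_conv yt hyt).map_sum_le
      (fun k hk => (hw k hk).le) hw1 (fun k _ => hg k)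
    simpa only [smul_eq_mul] using this
  -- Hoeffding
  have hhoef : Real.log S ≤ -η1 * m + η1 ^ 2 / 8 := by
    have := aux_hoeff_sum s w lk (fun k hk => (hw k hk).le) hw1 (fun k _ => hlk01 k)
      (-η1) (by linarith)
    simpa [hS, hm, neg_pow] using this
  have hm' : m ≤ -(A * Real.log S) + η1 / 8 := by
    have h := mul_le_mul_of_nonneg_left hhoef hApos.le
    have hid : A * (-η1 * m + η1 ^ 2 / 8) = -m + η1 / 8 := by
      linear_combination (-m + η1 / 8) * hAη
    rw [hid] at h
    linarith
  -- Z ≤ N^{1-α} S^α via power mean inequality ⇒ log bound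
  have hZform : Z = ∑ k ∈ s, (w k * Real.exp (-η1 * lk k)) ^ α := by
    refine Finset.sum_congr rfl fun k hk => ?_
    rw [Real.mul_rpow (hw k hk).le (Real.exp_pos _).le, ← Real.exp_mul]
    congr 2
    rw [hα]
    field_simp
  have hmean : (N:ℝ)⁻¹ * Z ≤ ((N:ℝ)⁻¹ * S) ^ α := by
    have hcard : (s.card : ℝ) = (N : ℝ) := by
      have : s.card = N := by simp [hsdef]
      rw [this]
    have hw' : ∑ _k ∈ s, (N:ℝ)⁻¹ = 1 := by
      rw [Finset.sum_const, nsmul_eq_mul, hcard]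
      field_simp
    have happ := Real.arith_mean_le_rpow_mean s (fun _ => (N:ℝ)⁻¹)
      (fun k => (w k * Real.exp (-η1 * lk k)) ^ α)
      (fun k _ => by positivity) hw'
      (fun k hk => Real.rpow_nonneg (mul_nonneg (hw k hk).le (Real.exp_pos _).le) α)
      (p := 1 / α) (by rw [le_div_iff₀ hα0, one_mul]; exact hα1)
    have hz : ∀ k ∈ s, ((w k * Real.exp (-η1 * lk k)) ^ α) ^ (1/α)
        = w k * Real.exp (-η1 * lk k) := by
      intro k hk
      rw [← Real.rpow_mul (mul_nonneg (hw k hk).le (Real.exp_pos _).le),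
        mul_one_div_cancel hα0.ne', Real.rpow_one]
    rw [one_div_one_div] at happ
    calc (N:ℝ)⁻¹ * Z = ∑ k ∈ s, (N:ℝ)⁻¹ * (w k * Real.exp (-η1 * lk k)) ^ α := by
          rw [hZform, Finset.mul_sum]
      _ ≤ (∑ k ∈ s, (N:ℝ)⁻¹ * ((w k * Real.exp (-η1 * lk k)) ^ α) ^ (1/α)) ^ α := happ
      _ = ((N:ℝ)⁻¹ * S) ^ α := by
          rw [hS, Finset.mul_sum]
          congr 1
          exact Finset.sum_congr rfl fun k hk => by rw [hz k hk]
  have hlogZ : Real.log Z ≤ (1 - α) * Real.log (N:ℝ) + α * Real.log S := by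
    have h1 : Z ≤ (N:ℝ) * ((N:ℝ)⁻¹ * S) ^ α := by
      have := mul_le_mul_of_nonneg_left hmean hNpos.le
      calc Z = (N:ℝ) * ((N:ℝ)⁻¹ * Z) := by field_simp
        _ ≤ (N:ℝ) * ((N:ℝ)⁻¹ * S) ^ α := this
    have h2 := Real.log_le_log hZpos h1
    rw [Real.log_mul hNpos.ne' (by positivity),
      Real.log_rpow (by positivity), Real.log_mul (by positivity) hSpos.ne',
      Real.log_inv] at h2
    linarith
  -- recursion: log of the update
  have hrec : Real.log p' = Real.log (N:ℝ) - Real.log (N':ℝ) + α * Real.log (w e)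
      - η2 * lk e - Real.log Z := by
    rw [hp', Real.log_div (by positivity) hZpos.ne',
      Real.log_mul (by positivity) (by positivity),
      Real.log_div hNpos.ne' hN'pos.ne',
      Real.log_mul (Real.rpow_pos_of_pos hwe α).ne' (Real.exp_pos _).ne',
      Real.log_rpow hwe, Real.log_exp]
    ring
  -- assemble
  have hBrec : B * Real.log p' = B * Real.log (N:ℝ) - B * Real.log (N':ℝ)
      + A * Real.log (w e) - lk e - B * Real.log Z := by
    have := congrArg (fun z => B * z) hrec
    rw [this]
    linear_combination (Real.log (w e)) * hBα - lk e * hBη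
  have hZB : B * Real.log Z ≤ (B - A) * Real.log (N:ℝ) + A * Real.log S := by
    have h := mul_le_mul_of_nonneg_left hlogZ hBpos.le
    have hid : B * ((1 - α) * Real.log (N:ℝ) + α * Real.log S)
        = (B - A) * Real.log (N:ℝ) + A * Real.log S := by
      linear_combination (Real.log S - Real.log (N:ℝ)) * hBα
    rw [hid] at h
    exact h
  rw [Real.log_mul hN'pos.ne' hp'pos.ne', Real.log_mul hNpos.ne' hwe.ne']
  have hgoal : ℓ (∑ k ∈ s, w k * g k) yt - lk e ≤
      η1 / 8 + B * (Real.log (N':ℝ) + Real.log p') - A * (Real.log (N:ℝ) + Real.log (w e)) := by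
    nlinarith [hJ, hm', hBrec, hZB]
  calc ℓ (∑ k ∈ s, w k * g k) yt - ℓ (g e) yt = ℓ (∑ k ∈ s, w k * g k) yt - lk e := rfl
    _ ≤ η1 / 8 + B * (Real.log (N':ℝ) + Real.log p') - A * (Real.log (N:ℝ) + Real.log (w e)) := hgoal
    _ = η1 / 8 + (1/η2) * (Real.log (N':ℝ) + Real.log p') - (1/η1) * (Real.log (N:ℝ) + Real.log (w e)) := by rw [hA, hB]



/-- First statement of Lemma 6: regret bound of the exponentially weighted average
forecaster with entering experts. Experts `d = 1, 2, …` enter at strictly increasing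
starting times `t_1 = 2 < t_2 < …`; `D t` is the number of active experts at time `t`;
the weights follow the time-varying exponential update with nonincreasing positive
learning rates `η t`, a newly entering expert receiving weight `1/D_{t+1}`; the
prediction is the weighted average of the active experts' predictions. Then for every
`T ≥ t_1` and every expert `d` active by time `T`, the regret with respect to expert `d`
over `t = t_d, …, T` is at most `(1/η_{T+1}) log D_{T+1} + (1/8) ∑_{t=t_d}^T η_t`. -/
theorem stmt_10 (M : ℝ) (hM : 0 ≤ M)
    (ℓ : ℝ → ℝ → ℝ)
    (hℓ_val : ∀ x ∈ Set.Icc (0:ℝ) 1, ∀ y ∈ Set.Icc (0:ℝ) 1, ℓ x y ∈ Set.Icc (0:ℝ) 1)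
    (hℓ_conv : ∀ y ∈ Set.Icc (0:ℝ) 1, ConvexOn ℝ (Set.Icc (0:ℝ) 1) (fun x => ℓ x y))
    (hℓ_lip : ∀ y ∈ Set.Icc (0:ℝ) 1,
      LipschitzOnWith M.toNNReal (fun x => ℓ x y) (Set.Icc (0:ℝ) 1))
    -- the starting times `t_1 = 2 < t_2 < t_3 < …`:
    (td : ℕ → ℕ) (htd1 : td 1 = 2) (htd_mono : ∀ d, 1 ≤ d → td d < td (d + 1))
    -- `D t = max {d ≥ 1 : t_d ≤ t}` for `t ≥ t_1 = 2`:
    (D : ℕ → ℕ)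
    (hD : ∀ t, 2 ≤ t → (1 ≤ D t ∧ td (D t) ≤ t ∧ ∀ d, 1 ≤ d → td d ≤ t → d ≤ D t))
    -- positive nonincreasing learning rates:
    (η : ℕ → ℝ) (hη_pos : ∀ t, 1 ≤ t → 0 < η t) (hη_mono : ∀ t, 1 ≤ t → η (t + 1) ≤ η t)
    -- the experts' predictions and the observations, all in `[0,1]`:
    (f : ℕ → ℕ → ℝ) (hf : ∀ d t, f d t ∈ Set.Icc (0:ℝ) 1)
    (y : ℕ → ℝ) (hy : ∀ t, y t ∈ Set.Icc (0:ℝ) 1)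
    -- the weights:
    (p : ℕ → ℕ → ℝ)
    (hp_init : p 1 2 = 1)
    (hp_update : ∀ t, 2 ≤ t → ∀ d, 1 ≤ d → d ≤ D t →
      p d (t + 1) = ((D t : ℝ) / (D (t + 1) : ℝ)) *
        (p d t ^ (η (t + 1) / η t) * Real.exp (-(η (t + 1)) * ℓ (f d t) (y t))) /
        (∑ k ∈ Finset.Icc 1 (D t),
          p k t ^ (η (t + 1) / η t) * Real.exp (-(η (t + 1)) * ℓ (f k t) (y t))))
    (hp_enter : ∀ t, 2 ≤ t → D (t + 1) = D t + 1 →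
      p (D (t + 1)) (t + 1) = 1 / (D (t + 1) : ℝ)) :
    ∀ T, 2 ≤ T → ∀ d, 1 ≤ d → td d ≤ T →
      ∑ t ∈ Finset.Icc (td d) T,
          (ℓ (∑ k ∈ Finset.Icc 1 (D t), p k t * f k t) (y t) - ℓ (f d t) (y t))
        ≤ (1 / η (T + 1)) * Real.log (D (T + 1))
          + (1 / 8) * ∑ t ∈ Finset.Icc (td d) T, η t := by
  -- monotonicity of starting times
  have htd_le : ∀ a b, 1 ≤ a → a ≤ b → td a ≤ td b := by
    intro a b ha hab
    induction b, hab using Nat.le_induction with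
    | base => exact le_rfl
    | succ n hn ih => exact le_trans ih (le_of_lt (htd_mono n (le_trans ha hn)))
  have htd_lt : ∀ a b, 1 ≤ a → a < b → td a < td b := by
    intro a b ha hab
    have h1 : td a ≤ td (b - 1) := htd_le a (b - 1) ha (by omega)
    have h2 : td (b - 1) < td (b - 1 + 1) := htd_mono (b - 1) (by omega)
    have : b - 1 + 1 = b := by omega
    rw [this] at h2
    omega
  have htd_ge2 : ∀ d, 1 ≤ d → 2 ≤ td d := by
    intro d hd
    have := htd_le 1 d le_rfl hd
    omega
  -- characterization : d ≤ D t ↔ td d ≤ t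
  have hiff : ∀ t, 2 ≤ t → ∀ d, 1 ≤ d → (d ≤ D t ↔ td d ≤ t) := by
    intro t ht d hd
    obtain ⟨h1, h2, h3⟩ := hD t ht
    constructor
    · intro h
      exact le_trans (htd_le d (D t) hd h) h2
    · intro h
      exact h3 d hd h
  have hD2 : D 2 = 1 := by
    obtain ⟨h1, h2, _⟩ := hD 2 le_rfl
    by_contra h
    have h2' : 2 ≤ D 2 := by omega
    have := htd_lt 1 (D 2) le_rfl h2'
    omega
  have hDle : ∀ t, 2 ≤ t → D t ≤ D (t + 1) := by
    intro t ht
    obtain ⟨h1, h2, _⟩ := hD t ht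
    exact (hiff (t + 1) (by omega) (D t) h1).mpr (by omega)
  have hDsucc : ∀ t, 2 ≤ t → D (t + 1) ≤ D t + 1 := by
    intro t ht
    by_contra h
    push_neg at h
    obtain ⟨h1, h2, h3⟩ := hD t ht
    obtain ⟨h1', h2', h3'⟩ := hD (t + 1) (by omega)
    -- td (D t + 1) > t, i.e. ≥ t + 1
    have hgt : t < td (D t + 1) := by
      by_contra hle
      push_neg at hle
      have := h3 (D t + 1) (by omega) hle
      omega
    have hlt : td (D t + 1) < td (D (t + 1)) := htd_lt (D t + 1) (D (t + 1)) (by omega) (by omega)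
    omega
  -- invariant: positivity and normalization
  have hinv : ∀ t, 2 ≤ t →
      (∀ e, 1 ≤ e → e ≤ D t → 0 < p e t) ∧ (∑ k ∈ Finset.Icc 1 (D t), p k t = 1) := by
    intro t ht
    induction t, ht using Nat.le_induction with
    | base =>
      rw [hD2]
      constructor
      · intro e he1 he2
        have : e = 1 := by omega
        rw [this, hp_init]; norm_num
      · simp [hp_init]
    | succ t ht ih =>
      obtain ⟨hpos, hsum⟩ := ih
      obtain ⟨hD1, _, _⟩ := hD t ht
      have hD1' : 1 ≤ D (t + 1) := (hD (t + 1) (by omega)).1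
      set Z := ∑ k ∈ Finset.Icc 1 (D t),
          p k t ^ (η (t + 1) / η t) * Real.exp (-(η (t + 1)) * ℓ (f k t) (y t)) with hZ
      have hZpos : 0 < Z := by
        apply Finset.sum_pos
        · intro k hk
          simp only [Finset.mem_Icc] at hk
          exact mul_pos (Real.rpow_pos_of_pos (hpos k hk.1 hk.2) _) (Real.exp_pos _)
        · exact ⟨1, by simp; omega⟩
      have hNpos : (0:ℝ) < (D t : ℝ) := by exact_mod_cast hD1
      have hN'pos : (0:ℝ) < (D (t + 1) : ℝ) := by exact_mod_cast hD1'
      have hposnew : ∀ e, 1 ≤ e → e ≤ D t → 0 < p e (t + 1) := by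
        intro e he1 he2
        rw [hp_update t ht e he1 he2, ← hZ]
        exact div_pos (mul_pos (div_pos hNpos hN'pos)
          (mul_pos (Real.rpow_pos_of_pos (hpos e he1 he2) _) (Real.exp_pos _))) hZpos
      have hsumold : ∑ k ∈ Finset.Icc 1 (D t), p k (t + 1) = (D t : ℝ) / (D (t + 1) : ℝ) := by
        have : ∀ k ∈ Finset.Icc 1 (D t), p k (t + 1) =
            ((D t : ℝ) / (D (t + 1) : ℝ)) / Z *
              (p k t ^ (η (t + 1) / η t) * Real.exp (-(η (t + 1)) * ℓ (f k t) (y t))) := by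
          intro k hk
          simp only [Finset.mem_Icc] at hk
          rw [hp_update t ht k hk.1 hk.2, ← hZ]
          ring
        rw [Finset.sum_congr rfl this, ← Finset.mul_sum, ← hZ]
        field_simp
      have hcase : D (t + 1) = D t ∨ D (t + 1) = D t + 1 := by
        have := hDle t ht
        have := hDsucc t ht
        omega
      rcases hcase with hc | hc
      · constructor
        · intro e he1 he2
          exact hposnew e he1 (by omega)
        · rw [hc, hsumold, hc]
          field_simp
      · constructor
        · intro e he1 he2
          rcases Nat.lt_or_ge e (D t + 1) with h | h
          · exact hposnew e he1 (by omega)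
          · have : e = D (t + 1) := by omega
            rw [this, hp_enter t ht hc]
            positivity
        · rw [hc, Finset.sum_Icc_succ_top (by omega)]
          have hpen := hp_enter t ht hc
          rw [hc] at hpen
          rw [hpen, hsumold, hc]
          push_cast
          field_simp
  -- weights are at most 1
  have hple : ∀ t, 2 ≤ t → ∀ e, 1 ≤ e → e ≤ D t → p e t ≤ 1 := by
    intro t ht e he1 he2
    obtain ⟨hpos, hsum⟩ := hinv t ht
    calc p e t ≤ ∑ k ∈ Finset.Icc 1 (D t), p k t := by
          apply Finset.single_le_sum (f := fun k => p k t)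
          · intro k hk
            simp only [Finset.mem_Icc] at hk
            exact (hpos k hk.1 hk.2).le
          · simp only [Finset.mem_Icc]; omega
      _ = 1 := hsum
  -- the weight of an expert at its starting time
  have hstartD : ∀ d, 1 ≤ d → D (td d) = d := by
    intro d hd
    have ht2 : 2 ≤ td d := htd_ge2 d hd
    obtain ⟨h1, h2, h3⟩ := hD (td d) ht2
    have hle1 : d ≤ D (td d) := h3 d hd le_rfl
    have hle2 : D (td d) ≤ d := by
      by_contra h
      push_neg at h
      have := htd_lt d (D (td d)) hd h
      omega
    omega
  have hstart : ∀ d, 1 ≤ d → p d (td d) = 1 / (D (td d) : ℝ) := by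
    intro d hd
    rcases Nat.lt_or_ge d 2 with h | h
    · have hd1 : d = 1 := by omega
      rw [hd1, htd1, hp_init, hD2]
      norm_num
    · -- d ≥ 2 : use hp_enter at time t = td d - 1
      set t := td d - 1 with htdef
      have ht2 : 2 ≤ t := by
        have := htd_lt 1 d le_rfl (by omega)
        rw [htd1] at this
        omega
      have htt : t + 1 = td d := by
        have := htd_ge2 d hd
        omega
      have hDt1 : D (t + 1) = d := by rw [htt]; exact hstartD d hd
      have hDt : D t = d - 1 := by
        have hub : D t ≤ d - 1 := by
          by_contra hcon
          push_neg at hcon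
          have : d ≤ D t := by omega
          have := (hiff t ht2 d hd).mp this
          omega
        have hlb : d - 1 ≤ D t := by
          apply (hiff t ht2 (d - 1) (by omega)).mpr
          have := htd_lt (d - 1) d (by omega) (by omega)
          omega
        omega
      have hc : D (t + 1) = D t + 1 := by omega
      have := hp_enter t ht2 hc
      rw [hDt1] at this
      rw [hstartD d hd, ← htt]
      exact this
  -- main argument
  intro T hT d hd hdT
  set a := td d with ha
  have ha2 : 2 ≤ a := htd_ge2 d hd
  set Φ : ℕ → ℝ := fun t => (1 / η t) * Real.log ((D t : ℝ) * p d t) with hΦ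
  have hstep : ∀ t ∈ Finset.Icc a T,
      ℓ (∑ k ∈ Finset.Icc 1 (D t), p k t * f k t) (y t) - ℓ (f d t) (y t)
        ≤ η t / 8 + (Φ (t + 1) - Φ t) := by
    intro t htmem
    simp only [Finset.mem_Icc] at htmem
    have ht2 : 2 ≤ t := le_trans ha2 htmem.1
    have hdDt : d ≤ D t := (hiff t ht2 d hd).mpr (le_trans (le_of_eq ha.symm) htmem.1)
    obtain ⟨hpos, hsum⟩ := hinv t ht2
    have hη1 := hη_pos t (by omega)
    have hη2 := hη_pos (t + 1) (by omega)
    have hη21 := hη_mono t (by omega)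
    have := aux_step ℓ hℓ_val hℓ_conv (η t) (η (t + 1)) hη1 hη2 hη21
      (D t) (D (t + 1)) (hD t ht2).1 (hD (t + 1) (by omega)).1
      (fun k => p k t) (fun k hk => by simp only [Finset.mem_Icc] at hk; exact hpos k hk.1 hk.2)
      hsum (fun k => f k t) (fun k => hf k t) (y t) (hy t)
      d (by simp only [Finset.mem_Icc]; omega)
      (p d (t + 1)) (by
        have := hp_update t ht2 d hd hdDt
        convert this using 4 <;> ring_nf)
    calc ℓ (∑ k ∈ Finset.Icc 1 (D t), p k t * f k t) (y t) - ℓ (f d t) (y t)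
        ≤ η t / 8 + (1 / η (t + 1)) * Real.log ((D (t + 1) : ℝ) * p d (t + 1))
          - (1 / η t) * Real.log ((D t : ℝ) * p d t) := this
      _ = η t / 8 + (Φ (t + 1) - Φ t) := by rw [hΦ]; ring
  have hsum_le : ∑ t ∈ Finset.Icc a T,
      (ℓ (∑ k ∈ Finset.Icc 1 (D t), p k t * f k t) (y t) - ℓ (f d t) (y t))
      ≤ ∑ t ∈ Finset.Icc a T, (η t / 8 + (Φ (t + 1) - Φ t)) :=
    Finset.sum_le_sum hstep
  have htele : ∑ t ∈ Finset.Icc a T, (Φ (t + 1) - Φ t) = Φ (T + 1) - Φ a :=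
    aux_telescope Φ a T hdT
  have hsplit : ∑ t ∈ Finset.Icc a T, (η t / 8 + (Φ (t + 1) - Φ t)) =
      (1 / 8) * (∑ t ∈ Finset.Icc a T, η t) + (Φ (T + 1) - Φ a) := by
    rw [Finset.sum_add_distrib, htele, Finset.mul_sum]
    congr 1
    exact Finset.sum_congr rfl fun t _ => by ring
  -- Φ a = 0
  have hΦa : Φ a = 0 := by
    rw [hΦ]
    simp only
    rw [hstart d hd, ← ha]
    have hDa : (0:ℝ) < ((D a : ℝ)) := by
      exact_mod_cast (hD a ha2).1
    rw [mul_one_div, div_self hDa.ne', Real.log_one, mul_zero]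
  -- Φ (T+1) ≤ (1/η (T+1)) log D (T+1)
  have hΦT : Φ (T + 1) ≤ (1 / η (T + 1)) * Real.log ((D (T + 1) : ℝ)) := by
    rw [hΦ]
    simp only
    have hη := hη_pos (T + 1) (by omega)
    have hdDT1 : d ≤ D (T + 1) := (hiff (T + 1) (by omega) d hd).mpr (by omega)
    have hDpos : (0:ℝ) < (D (T + 1) : ℝ) := by
      exact_mod_cast (hD (T + 1) (by omega)).1
    have hppos := (hinv (T + 1) (by omega)).1 d hd hdDT1
    have hple1 := hple (T + 1) (by omega) d hd hdDT1
    apply mul_le_mul_of_nonneg_left _ (by positivity)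
    apply Real.log_le_log (by positivity)
    nlinarith
  calc ∑ t ∈ Finset.Icc a T,
      (ℓ (∑ k ∈ Finset.Icc 1 (D t), p k t * f k t) (y t) - ℓ (f d t) (y t))
      ≤ (1 / 8) * (∑ t ∈ Finset.Icc a T, η t) + (Φ (T + 1) - Φ a) := by
        rw [← hsplit]; exact hsum_le
    _ ≤ (1 / 8) * (∑ t ∈ Finset.Icc a T, η t) + (1 / η (T + 1)) * Real.log ((D (T + 1) : ℝ)) := by
        rw [hΦa]
        linarith
    _ = (1 / η (T + 1)) * Real.log ((D (T + 1) : ℝ))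
        + (1 / 8) * ∑ t ∈ Finset.Icc a T, η t := by ring
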